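/- Let a group G act by isometries on an ℝ-tree T, with the action nontrivial (no point of T is fixed by every element of G) and minimal (every nonempty G-invariant connected subset of T equals T). Suppose the collection of arc stabilizers satisfies the ascending chain condition: there is no infinite sequence A₁, A₂, A₃, … of nondegenerate arcs of T with Fix(A₁) ⊊ Fix(A₂) ⊊ Fix(A₃) ⊊ ⋯. Then the action is stable: every nondegenerate subtree of T contains a stable subtree. -/

import Mathlib

/-- An *arc* from `x` to `y` in a metric space: the image of a topological embedding of a
closed real interval `[a,b]` (with `a = b` allowed) sending `a` to `x` and `b` to `y`.
Since `[a,b]` is compact and a metric space is Hausdorff, a topological embedding is the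
same as a continuous injective map. -/
def IsArcIn {T : Type*} [MetricSpace T] (x y : T) (S : Set T) : Prop :=
  ∃ a b : ℝ, a ≤ b ∧ ∃ α : ℝ → T,
    ContinuousOn α (Set.Icc a b) ∧ Set.InjOn α (Set.Icc a b) ∧
    α '' Set.Icc a b = S ∧ α a = x ∧ α b = y

/-- A *geodesic segment* from `x` to `y`: the image of an isometric embedding of a closed
real interval sending the endpoints to `x` and `y`. -/
def IsGeodesicSegmentIn {T : Type*} [MetricSpace T] (x y : T) (S : Set T) : Prop :=
  ∃ a b : ℝ, a ≤ b ∧ ∃ α : ℝ → T,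
    (∀ s ∈ Set.Icc a b, ∀ t ∈ Set.Icc a b, dist (α s) (α t) = |s - t|) ∧
    α '' Set.Icc a b = S ∧ α a = x ∧ α b = y

/-- An ℝ-tree: a metric space in which any two points are joined by a unique arc,
and this arc is a geodesic segment. -/
def IsRTree (T : Type*) [MetricSpace T] : Prop :=
  ∀ x y : T, (∃! S : Set T, IsArcIn x y S) ∧
    ∀ S : Set T, IsArcIn x y S → IsGeodesicSegmentIn x y S

/-- The Gromov product `(x·y)_w = (d(w,x) + d(w,y) − d(x,y))/2`. -/
noncomputable def gromovProd {T : Type*} [MetricSpace T] (w x y : T) : ℝ :=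
  (dist w x + dist w y - dist x y) / 2

/-- A subset of an ℝ-tree is *nondegenerate* if it contains more than one point. -/
def Nondegenerate {T : Type*} (S : Set T) : Prop :=
  ∃ x ∈ S, ∃ y ∈ S, x ≠ y

/-- The pointwise stabilizer `Fix(S) = {g : G | g·x = x for all x ∈ S}` of a subset of an
ℝ-tree under an isometric action `ρ`. -/
def fixOf {G T : Type*} [Group G] [MetricSpace T] (ρ : G →* (T ≃ᵢ T)) (S : Set T) :
    Set G :=
  {g : G | ∀ x ∈ S, ρ g x = x}

/-- A *stable subtree* for the action `ρ`: a nondegenerate subtree (nonempty connected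
subset with more than one point) `S` such that every nondegenerate subtree of `S` has the
same pointwise stabilizer as `S`. -/
def IsStableSubtree {G T : Type*} [Group G] [MetricSpace T] (ρ : G →* (T ≃ᵢ T))
    (S : Set T) : Prop :=
  IsConnected S ∧ Nondegenerate S ∧
    ∀ S' : Set T, S' ⊆ S → IsConnected S' → Nondegenerate S' → fixOf ρ S' = fixOf ρ S

section Lemmas
variable {T : Type*} [MetricSpace T]

lemma geo_continuousOn {α : ℝ → T} {a b : ℝ}
    (hα : ∀ s ∈ Set.Icc a b, ∀ t ∈ Set.Icc a b, dist (α s) (α t) = |s - t|) :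
    ContinuousOn α (Set.Icc a b) := by
  refine LipschitzOnWith.continuousOn (K := 1) ?_
  refine LipschitzOnWith.of_dist_le_mul fun s hs t ht => ?_
  rw [hα s hs t ht, Real.dist_eq]
  simp

lemma geo_injOn {α : ℝ → T} {a b : ℝ}
    (hα : ∀ s ∈ Set.Icc a b, ∀ t ∈ Set.Icc a b, dist (α s) (α t) = |s - t|) :
    Set.InjOn α (Set.Icc a b) := by
  intro s hs t ht hst
  have := hα s hs t ht
  rw [hst, dist_self] at this
  have := abs_eq_zero.mp this.symm
  linarith [sub_eq_zero.mp this]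

lemma arc_of_geo {x y : T} {S : Set T} (hg : IsGeodesicSegmentIn x y S) : IsArcIn x y S := by
  obtain ⟨a, b, hab, α, hiso, himg, hx, hy⟩ := hg
  exact ⟨a, b, hab, α, geo_continuousOn hiso, geo_injOn hiso, himg, hx, hy⟩

lemma arc_unique (h : IsRTree T) {x y : T} {S₁ S₂ : Set T}
    (h1 : IsArcIn x y S₁) (h2 : IsArcIn x y S₂) : S₁ = S₂ :=
  (h x y).1.unique h1 h2

/-- Normalized geodesic parametrization of the arc from `x` to `y`. -/
lemma exists_geo (h : IsRTree T) (x y : T) :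
    ∃ δ : ℝ → T,
      (∀ s ∈ Set.Icc 0 (dist x y), ∀ t ∈ Set.Icc 0 (dist x y), dist (δ s) (δ t) = |s - t|) ∧
      δ 0 = x ∧ δ (dist x y) = y ∧ IsArcIn x y (δ '' Set.Icc 0 (dist x y)) := by
  obtain ⟨S, hS⟩ := (h x y).1.exists
  obtain ⟨a, b, hab, α, hiso, himg, hx, hy⟩ := (h x y).2 S hS
  have hd : dist x y = b - a := by
    have := hiso a ⟨le_refl a, hab⟩ b ⟨hab, le_refl b⟩
    rw [hx, hy] at this
    rw [this, abs_sub_comm, abs_of_nonneg (by linarith)]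
  refine ⟨fun t => α (t + a), ?_, ?_, ?_, ?_⟩
  · intro s hs t ht
    have := hiso (s + a) ⟨by linarith [hs.1], by linarith [hs.2, hd]⟩
      (t + a) ⟨by linarith [ht.1], by linarith [ht.2, hd]⟩
    simpa using this
  · simpa using hx
  · rw [hd]; simpa using hy
  · have himg' : (fun t => α (t + a)) '' Set.Icc 0 (dist x y) = S := by
      rw [← himg]
      ext w
      simp only [Set.mem_image]
      constructor
      · rintro ⟨t, ht, rfl⟩
        exact ⟨t + a, ⟨by linarith [ht.1], by linarith [ht.2, hd]⟩, rfl⟩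
      · rintro ⟨t, ht, rfl⟩
        exact ⟨t - a, ⟨by linarith [ht.1], by linarith [ht.2, hd]⟩, by simp⟩
    rw [himg']; exact hS

/-- A point of a normalized geodesic lies at parameter `dist x p`. -/
lemma geo_param_of_mem {δ : ℝ → T} {D : ℝ}
    (hiso : ∀ s ∈ Set.Icc 0 D, ∀ t ∈ Set.Icc 0 D, dist (δ s) (δ t) = |s - t|)
    {p : T} (hp : p ∈ δ '' Set.Icc 0 D) :
    dist (δ 0) p ∈ Set.Icc (0:ℝ) D ∧ δ (dist (δ 0) p) = p ∧
      dist p (δ D) = D - dist (δ 0) p := by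
  obtain ⟨u, hu, rfl⟩ := hp
  have hD : (0:ℝ) ≤ D := le_trans hu.1 hu.2
  have h0 : dist (δ 0) (δ u) = u := by
    rw [hiso 0 ⟨le_refl 0, hD⟩ u hu, abs_sub_comm, abs_of_nonneg (by linarith [hu.1])]
    ring
  refine ⟨by rw [h0]; exact hu, by rw [h0], ?_⟩
  rw [h0, hiso u hu D ⟨hD, le_refl D⟩, abs_of_nonpos (by linarith [hu.2]), neg_sub]



/-- Median point lemma for ℝ-trees. -/
lemma median (h : IsRTree T) (x y z : T) :
    ∃ m : T, dist x y = dist x m + dist m y ∧ dist x z = dist x m + dist m z ∧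
      dist y z = dist y m + dist m z ∧ ∀ S : Set T, IsArcIn x z S → m ∈ S := by
  obtain ⟨α, hα, hα0, hαD, hαarc⟩ := exists_geo h x y
  obtain ⟨β, hβ, hβ0, hβD, hβarc⟩ := exists_geo h x z
  set D₁ := dist x y with hD₁def
  set D₂ := dist x z with hD₂def
  have hD₁0 : 0 ≤ D₁ := dist_nonneg
  have hD₂0 : 0 ≤ D₂ := dist_nonneg
  set M := min D₁ D₂ with hMdef
  have hM1 : M ≤ D₁ := min_le_left _ _
  have hM2 : M ≤ D₂ := min_le_right _ _
  have hM0 : 0 ≤ M := le_min hD₁0 hD₂0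
  set K : Set ℝ := {s | s ∈ Set.Icc (0:ℝ) M ∧ α s = β s} with hKdef
  have h0K : (0:ℝ) ∈ K := ⟨⟨le_refl 0, hM0⟩, by rw [hα0, hβ0]⟩
  have hKbdd : BddAbove K := ⟨M, fun s hs => hs.1.2⟩
  have hKclosed : IsClosed K := by
    have hcα : ContinuousOn α (Set.Icc 0 M) :=
      (geo_continuousOn hα).mono (Set.Icc_subset_Icc le_rfl hM1)
    have hcβ : ContinuousOn β (Set.Icc 0 M) :=
      (geo_continuousOn hβ).mono (Set.Icc_subset_Icc le_rfl hM2)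
    have hK' : K = Set.Icc (0:ℝ) M ∩ (fun s => dist (α s) (β s)) ⁻¹' {0} := by
      ext s
      simp only [hKdef, Set.mem_setOf_eq, Set.mem_inter_iff, Set.mem_preimage,
        Set.mem_singleton_iff, dist_eq_zero]
    rw [hK']
    have hcd : ContinuousOn (fun s => dist (α s) (β s)) (Set.Icc 0 M) :=
      continuous_dist.comp_continuousOn (hcα.prodMk hcβ)
    exact hcd.preimage_isClosed_of_isClosed isClosed_Icc isClosed_singleton
  set s₀ := sSup K with hs₀def
  have hs₀K : s₀ ∈ K := hKclosed.csSup_mem ⟨0, h0K⟩ hKbdd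
  have hs₀0 : 0 ≤ s₀ := hs₀K.1.1
  have hs₀M : s₀ ≤ M := hs₀K.1.2
  have heqm : α s₀ = β s₀ := hs₀K.2
  have hxm : dist x (α s₀) = s₀ := by
    rw [← hα0, hα 0 ⟨le_refl 0, hD₁0⟩ s₀ ⟨hs₀0, le_trans hs₀M hM1⟩, abs_sub_comm,
      abs_of_nonneg (by linarith)]
    ring
  have hmy : dist (α s₀) y = D₁ - s₀ := by
    rw [← hαD, hα s₀ ⟨hs₀0, le_trans hs₀M hM1⟩ D₁ ⟨hD₁0, le_refl D₁⟩,
      abs_of_nonpos (by linarith [le_trans hs₀M hM1]), neg_sub]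
  have hmz : dist (α s₀) z = D₂ - s₀ := by
    rw [heqm, ← hβD, hβ s₀ ⟨hs₀0, le_trans hs₀M hM2⟩ D₂ ⟨hD₂0, le_refl D₂⟩,
      abs_of_nonpos (by linarith [le_trans hs₀M hM2]), neg_sub]
  -- the two geodesics diverge after s₀
  have claim : ∀ s, s₀ < s → s ≤ D₁ → ∀ t, s₀ < t → t ≤ D₂ → α s ≠ β t := by
    intro s hs1 hs2 t ht1 ht2 heq
    have hs' : s ∈ Set.Icc 0 D₁ := ⟨by linarith, hs2⟩
    have ht' : t ∈ Set.Icc 0 D₂ := ⟨by linarith, ht2⟩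
    have hsv : dist x (α s) = s := by
      rw [← hα0, hα 0 ⟨le_refl 0, hD₁0⟩ s hs', abs_sub_comm, abs_of_nonneg (by linarith)]
      ring
    have htv : dist x (β t) = t := by
      rw [← hβ0, hβ 0 ⟨le_refl 0, hD₂0⟩ t ht', abs_sub_comm, abs_of_nonneg (by linarith)]
      ring
    have hst : s = t := by rw [← hsv, heq, htv]
    have hsK : s ∈ K := ⟨⟨by linarith, le_min hs2 (by linarith)⟩, by rw [heq, hst]⟩
    have : s ≤ s₀ := le_csSup hKbdd hsK
    linarith
  -- concatenated path from y to z through m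
  set j := D₁ - s₀ with hjdef
  set L := j + (D₂ - s₀) with hLdef
  have hj0 : 0 ≤ j := by simp only [hjdef]; linarith [le_trans hs₀M hM1]
  have hjL : j ≤ L := by simp only [hLdef]; linarith [le_trans hs₀M hM2]
  have hL0 : 0 ≤ L := le_trans hj0 hjL
  set γ : ℝ → T :=
    fun t => if t ≤ j then α (max 0 (min (D₁ - t) D₁)) else β (max 0 (min (t - j + s₀) D₂))
    with hγdef
  have hγcont : Continuous γ := by
    have c1 : Continuous fun t : ℝ => max 0 (min (D₁ - t) D₁) :=
      continuous_const.max ((continuous_const.sub continuous_id).min continuous_const)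
    have c2 : Continuous fun t : ℝ => max 0 (min (t - j + s₀) D₂) :=
      continuous_const.max (((continuous_id.sub continuous_const).add
        continuous_const).min continuous_const)
    have b1 : Continuous fun t => α (max 0 (min (D₁ - t) D₁)) := by
      exact (geo_continuousOn hα).comp_continuous c1
        (fun t : ℝ => ⟨le_max_left _ _, max_le hD₁0 (min_le_right _ _)⟩)
    have b2 : Continuous fun t => β (max 0 (min (t - j + s₀) D₂)) := by
      exact (geo_continuousOn hβ).comp_continuous c2
        (fun t : ℝ => ⟨le_max_left _ _, max_le hD₂0 (min_le_right _ _)⟩)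
    refine Continuous.if_le b1 b2 continuous_id continuous_const ?_
    intro t ht
    change t = j at ht
    subst ht
    have h1 : D₁ - j = s₀ := by simp only [hjdef]; ring
    have h2 : j - j + s₀ = s₀ := by ring
    rw [h1, h2, min_eq_left (le_trans hs₀M hM1), max_eq_right hs₀0,
      min_eq_left (le_trans hs₀M hM2), max_eq_right hs₀0, heqm]
  have hγ1 : ∀ t, 0 ≤ t → t ≤ j → γ t = α (D₁ - t) := by
    intro t h1 h2
    have ha : s₀ ≤ D₁ - t := by simp only [hjdef] at h2; linarith
    rw [hγdef]
    simp only [if_pos h2]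
    rw [min_eq_left (by linarith), max_eq_right (by linarith)]
  have hγ2 : ∀ t, j < t → t ≤ L → γ t = β (t - j + s₀) := by
    intro t h1 h2
    have ha : s₀ < t - j + s₀ := by linarith
    have hb : t - j + s₀ ≤ D₂ := by simp only [hLdef] at h2; linarith
    rw [hγdef]
    simp only [if_neg (not_le.mpr h1)]
    rw [min_eq_left hb, max_eq_right (by linarith)]
  have hγ0 : γ 0 = y := by
    rw [hγ1 0 le_rfl hj0, sub_zero, hαD]
  have hγj : γ j = α s₀ := by
    rw [hγ1 j hj0 le_rfl, show D₁ - j = s₀ by simp only [hjdef]; ring]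
  have hγL : γ L = z := by
    rcases le_or_gt L j with hLj | hLj'
    · have hD₂s : D₂ = s₀ := by
        have h1 : D₂ - s₀ ≤ 0 := by simp only [hLdef] at hLj; linarith
        have h2 : s₀ ≤ D₂ := le_trans hs₀M hM2
        linarith
      have hLj2 : L = j := le_antisymm hLj hjL
      rw [hLj2, hγj, heqm, show s₀ = D₂ from hD₂s.symm, hβD]
    · rw [hγ2 L hLj' le_rfl, show L - j + s₀ = D₂ by simp only [hLdef]; ring, hβD]
  have hγinj : Set.InjOn γ (Set.Icc 0 L) := by
    have key : ∀ t₁ ∈ Set.Icc (0:ℝ) L, ∀ t₂ ∈ Set.Icc (0:ℝ) L,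
        t₁ ≤ j → j < t₂ → γ t₁ ≠ γ t₂ := by
      intro t₁ h₁ t₂ h₂ c₁ c₂ heq
      rw [hγ1 t₁ h₁.1 c₁, hγ2 t₂ c₂ h₂.2] at heq
      have hu1 : s₀ ≤ D₁ - t₁ := by simp only [hjdef] at c₁ ⊢; linarith
      have hu2 : D₁ - t₁ ≤ D₁ := by linarith [h₁.1]
      have hv1 : s₀ < t₂ - j + s₀ := by linarith
      have hv2 : t₂ - j + s₀ ≤ D₂ := by simp only [hLdef] at h₂; linarith [h₂.2]
      rcases eq_or_lt_of_le hu1 with he | hlt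
      · rw [← he, heqm] at heq
        have := geo_injOn hβ ⟨hs₀0, le_trans hs₀M hM2⟩ ⟨by linarith, hv2⟩ heq
        linarith
      · exact claim _ hlt hu2 _ hv1 hv2 heq
    intro t₁ h₁ t₂ h₂ heq
    rcases le_or_gt t₁ j with c₁ | c₁ <;> rcases le_or_gt t₂ j with c₂ | c₂
    · rw [hγ1 t₁ h₁.1 c₁, hγ1 t₂ h₂.1 c₂] at heq
      have := geo_injOn hα ⟨by linarith [h₁.1], by linarith [h₁.1]⟩
        ⟨by simp only [hjdef] at c₂; linarith, by linarith [h₂.1]⟩ heq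
      linarith
    · exact absurd heq (key t₁ h₁ t₂ h₂ c₁ c₂)
    · exact absurd heq.symm (key t₂ h₂ t₁ h₁ c₂ c₁)
    · rw [hγ2 t₁ c₁ h₁.2, hγ2 t₂ c₂ h₂.2] at heq
      have := geo_injOn hβ ⟨by linarith, by simp only [hLdef] at h₁; linarith [h₁.2]⟩
        ⟨by linarith, by simp only [hLdef] at h₂; linarith [h₂.2]⟩ heq
      linarith
  have hγarc : IsArcIn y z (γ '' Set.Icc 0 L) :=
    ⟨0, L, hL0, γ, hγcont.continuousOn, hγinj, rfl, hγ0, hγL⟩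
  obtain ⟨c, e, hce, δ, hδ, himg, hc, he⟩ := (h y z).2 _ hγarc
  have hyz : dist y z = e - c := by
    rw [← hc, ← he, hδ c ⟨le_refl c, hce⟩ e ⟨hce, le_refl e⟩, abs_of_nonpos (by linarith),
      neg_sub]
  have hmγ : α s₀ ∈ γ '' Set.Icc 0 L := ⟨j, ⟨hj0, hjL⟩, hγj⟩
  rw [← himg] at hmγ
  obtain ⟨u, hu, hum⟩ := hmγ
  have hym : dist y (α s₀) = u - c := by
    rw [← hum, ← hc, hδ c ⟨le_refl c, hce⟩ u hu, abs_of_nonpos (by linarith [hu.1]), neg_sub]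
  have hmz' : dist (α s₀) z = e - u := by
    rw [← hum, ← he, hδ u hu e ⟨hce, le_refl e⟩, abs_of_nonpos (by linarith [hu.2]), neg_sub]
  refine ⟨α s₀, by rw [hxm, hmy]; ring, by rw [hxm, hmz]; ring,
    by rw [hym, hmz', hyz]; ring, ?_⟩
  · intro S hS
    rw [arc_unique h hS hβarc, heqm]
    exact ⟨s₀, ⟨hs₀0, le_trans hs₀M hM2⟩, rfl⟩

/-- A metrically-between point lies on the arc. -/
lemma mem_arc_of_dist (h : IsRTree T) {x z p : T} {S : Set T} (hS : IsArcIn x z S)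
    (hadd : dist x p + dist p z = dist x z) : p ∈ S := by
  obtain ⟨m, h1, h2, h3, h4⟩ := median h x p z
  have hpm : dist m p = 0 := by
    have hc1 : dist p m = dist m p := dist_comm p m
    linarith
  have : m = p := eq_of_dist_eq_zero hpm
  exact this ▸ h4 S hS

/-- Stability of "p between x and z" under perturbation of `z`. -/
lemma between_stable (h : IsRTree T) {x p z z' : T}
    (hz : dist x p + dist p z = dist x z) (hlt : dist z z' < dist p z) :
    dist x p + dist p z' = dist x z' := by
  obtain ⟨δ, hδ, hδ0, hδD, hδarc⟩ := exists_geo h x z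
  have hp : p ∈ δ '' Set.Icc 0 (dist x z) := mem_arc_of_dist h hδarc hz
  obtain ⟨hpmem, hpval, hpz⟩ := geo_param_of_mem hδ hp
  rw [hδ0] at hpmem hpval hpz
  rw [hδD] at hpz
  obtain ⟨m, h1, h2, h3, -⟩ := median h x z z'
  have hm : m ∈ δ '' Set.Icc 0 (dist x z) := mem_arc_of_dist h hδarc h1.symm
  obtain ⟨hmmem, hmval, hmz⟩ := geo_param_of_mem hδ hm
  rw [hδ0] at hmmem hmval hmz
  rw [hδD] at hmz
  have hup_lt : dist x p < dist x m := by
    have hzm : dist m z ≤ dist z z' := by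
      have h4 : (0:ℝ) ≤ dist m z' := dist_nonneg
      have h5 : dist z m = dist m z := dist_comm z m
      linarith
    linarith
  have hpm : dist p m = dist x m - dist x p := by
    have hd := hδ _ hpmem _ hmmem
    rw [hpval, hmval] at hd
    rw [hd, abs_of_nonpos (by linarith), neg_sub]
  have hle : dist p z' ≤ dist p m + dist m z' := dist_triangle p m z'
  have hge : dist x p + dist p z' ≤ dist x z' := by rw [h2]; linarith
  linarith [dist_triangle x p z']

/-- A connected subset of an ℝ-tree contains the arc between any two of its points. -/
lemma arc_subset_connected (h : IsRTree T) {S : Set T} (hS : IsPreconnected S)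
    {x y : T} {A : Set T} (hx : x ∈ S) (hy : y ∈ S) (hA : IsArcIn x y A) : A ⊆ S := by
  intro p hp
  by_contra hpS
  have hpx : p ≠ x := fun e => hpS (e ▸ hx)
  have hpy : p ≠ y := fun e => hpS (e ▸ hy)
  have hbet : dist x p + dist p y = dist x y := by
    obtain ⟨a, b, hab, δ, hδ, himg, hδx, hδy⟩ := (h x y).2 A hA
    rw [← himg] at hp
    obtain ⟨t, ht, hte⟩ := hp
    have e1 : dist x (δ t) = t - a := by
      rw [← hδx, hδ a ⟨le_rfl, hab⟩ t ht, abs_sub_comm, abs_of_nonneg (by linarith [ht.1])]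
    have e2 : dist (δ t) y = b - t := by
      rw [← hδy, hδ t ht b ⟨hab, le_rfl⟩, abs_of_nonpos (by linarith [ht.2]), neg_sub]
    have e3 : dist x y = b - a := by
      rw [← hδx, ← hδy, hδ a ⟨le_rfl, hab⟩ b ⟨hab, le_rfl⟩,
        abs_of_nonpos (by linarith), neg_sub]
    rw [← hte, e1, e2, e3]; ring
  have hUopen : IsOpen {w : T | dist x w < dist x p + dist p w} := by
    have c1 : Continuous fun w : T => dist x w := continuous_const.dist continuous_id
    have c2 : Continuous fun w : T => dist x p + dist p w :=
      continuous_const.add (continuous_const.dist continuous_id)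
    exact isOpen_lt c1 c2
  have hVopen : IsOpen {w : T | w ≠ p ∧ dist x p + dist p w = dist x w} := by
    rw [Metric.isOpen_iff]
    intro w hw
    refine ⟨dist p w, dist_pos.mpr (Ne.symm hw.1), fun w' hw' => ?_⟩
    have hww' : dist w w' < dist p w := by
      rw [dist_comm]; exact hw'
    constructor
    · intro e
      rw [e, dist_comm] at hww'
      exact lt_irrefl _ hww'
    · exact between_stable h hw.2 hww'
  have hcover : S ⊆ {w : T | dist x w < dist x p + dist p w} ∪
      {w : T | w ≠ p ∧ dist x p + dist p w = dist x w} := by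
    intro w hwS
    rcases eq_or_lt_of_le (dist_triangle x p w) with he | hlt'
    · right; exact ⟨fun e => hpS (e ▸ hwS), he.symm⟩
    · left; exact hlt'
  have hxU : x ∈ {w : T | dist x w < dist x p + dist p w} := by
    have h1 : 0 < dist x p := dist_pos.mpr (Ne.symm hpx)
    have h2 : (0:ℝ) ≤ dist p x := dist_nonneg
    show dist x x < dist x p + dist p x
    rw [dist_self]; linarith
  obtain ⟨w, hwS, hwU, hwV⟩ :=
    hS _ _ hUopen hVopen hcover ⟨x, hx, hxU⟩ ⟨y, hy, Ne.symm hpy, hbet⟩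
  have : dist x w < dist x p + dist p w := hwU
  have h2 : dist x p + dist p w = dist x w := hwV.2
  linarith

/-- An isometry fixing the endpoints of an arc fixes it pointwise. -/
lemma fix_arc {G : Type*} [Group G] (ρ : G →* (T ≃ᵢ T)) (h : IsRTree T) {g : G} {u v : T}
    (hu : ρ g u = u) (hv : ρ g v = v) {B : Set T} (hB : IsArcIn u v B) :
    ∀ w ∈ B, ρ g w = w := by
  obtain ⟨a, b, hab, δ, hδ, himg, hδu, hδv⟩ := (h u v).2 B hB
  have harc' : IsArcIn u v ((fun t => ρ g (δ t)) '' Set.Icc a b) := by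
    refine ⟨a, b, hab, fun t => ρ g (δ t), ?_, ?_, rfl, by show ρ g (δ a) = u; rw [hδu, hu], by show ρ g (δ b) = v; rw [hδv, hv]⟩
    · exact (ρ g).continuous.comp_continuousOn (geo_continuousOn hδ)
    · intro s hs t ht hst
      exact geo_injOn hδ hs ht ((ρ g).injective hst)
  have himg2 : (fun t => ρ g (δ t)) '' Set.Icc a b = B := arc_unique h harc' hB
  intro w hw
  rw [← himg] at hw
  obtain ⟨t, ht, rfl⟩ := hw
  have hmem : ρ g (δ t) ∈ B := himg2 ▸ ⟨t, ht, rfl⟩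
  rw [← himg] at hmem
  obtain ⟨t', ht', he⟩ := hmem
  have d1 : dist (δ a) (δ t) = t - a := by
    rw [hδ a ⟨le_rfl, hab⟩ t ht, abs_sub_comm, abs_of_nonneg (by linarith [ht.1])]
  have d2 : dist (δ a) (δ t') = t' - a := by
    rw [hδ a ⟨le_rfl, hab⟩ t' ht', abs_sub_comm, abs_of_nonneg (by linarith [ht'.1])]
  have key : dist (δ a) (δ t') = dist (δ a) (δ t) := by
    rw [he, hδu]
    conv_lhs => rw [← hu]
    exact (ρ g).dist_eq u (δ t)
  have htt : t' = t := by linarith [d1, d2, key]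
  rw [← he, htt]

end Lemmas

/-- If a nontrivial minimal isometric action of `G` on an ℝ-tree has arc stabilizers
satisfying the ascending chain condition, then the action is stable: every nondegenerate
subtree contains a stable subtree. -/
theorem stable_of_acc_arc_stabilizers {T : Type*} [MetricSpace T] (h : IsRTree T)
    {G : Type*} [Group G] (ρ : G →* (T ≃ᵢ T))
    (hnt : ¬ ∃ x : T, ∀ g : G, ρ g x = x)
    (hmin : ∀ S : Set T, S.Nonempty → IsPreconnected S →
      (∀ g : G, ∀ x ∈ S, ρ g x ∈ S) → S = Set.univ)
    (hacc : ¬ ∃ A : ℕ → Set T,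
      (∀ n, ∃ x y : T, x ≠ y ∧ IsGeodesicSegmentIn x y (A n)) ∧
      (∀ n, fixOf ρ (A n) ⊂ fixOf ρ (A (n + 1)))) :
    ∀ S : Set T, IsConnected S → Nondegenerate S →
      ∃ S' : Set T, S' ⊆ S ∧ IsStableSubtree ρ S' := by
  intro S hSconn hSnd
  obtain ⟨x, hx, y, hy, hxy⟩ := hSnd
  obtain ⟨A₀, hA₀⟩ := (h x y).1.exists
  have hPA₀ : (∃ u v : T, u ≠ v ∧ IsArcIn u v A₀) ∧ A₀ ⊆ S :=
    ⟨⟨x, y, hxy, hA₀⟩, arc_subset_connected h hSconn.isPreconnected hx hy hA₀⟩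
  by_cases hex : ∃ A : Set T, ((∃ u v : T, u ≠ v ∧ IsArcIn u v A) ∧ A ⊆ S) ∧
      ∀ B : Set T, (∃ u v : T, u ≠ v ∧ IsArcIn u v B) → B ⊆ A →
        fixOf ρ B = fixOf ρ A
  · -- the maximal arc is a stable subtree
    obtain ⟨A, ⟨⟨u₀, v₀, huv₀, hAarc⟩, hAS⟩, hmax⟩ := hex
    refine ⟨A, hAS, ?_, ?_, ?_⟩
    · obtain ⟨a, b, hab, δ, hcont, hinj, himg, hδa, hδb⟩ := hAarc
      rw [← himg]
      exact ⟨(Set.nonempty_Icc.mpr hab).image δ, isPreconnected_Icc.image δ hcont⟩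
    · obtain ⟨a, b, hab, δ, hcont, hinj, himg, hδa, hδb⟩ := hAarc
      exact ⟨u₀, by rw [← himg]; exact ⟨a, ⟨le_rfl, hab⟩, hδa⟩,
        v₀, by rw [← himg]; exact ⟨b, ⟨hab, le_rfl⟩, hδb⟩, huv₀⟩
    · intro S'' hsub hconn hnd
      obtain ⟨u, huS, v, hvS, huvne⟩ := hnd
      obtain ⟨a, b, hab, δ, hδ, himg, hδa, hδb⟩ := (h u₀ v₀).2 A hAarc
      have huA : u ∈ δ '' Set.Icc a b := by rw [himg]; exact hsub huS
      have hvA : v ∈ δ '' Set.Icc a b := by rw [himg]; exact hsub hvS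
      obtain ⟨s, hs, hsu⟩ := huA
      obtain ⟨t, htm, htv⟩ := hvA
      have hstne : s ≠ t := fun e => huvne (by rw [← hsu, ← htv, e])
      have hs' : min s t ∈ Set.Icc a b :=
        ⟨le_min hs.1 htm.1, (min_le_left s t).trans hs.2⟩
      have ht' : max s t ∈ Set.Icc a b :=
        ⟨le_max_of_le_left hs.1, max_le hs.2 htm.2⟩
      have hslt : min s t < max s t := min_lt_max.mpr hstne
      have hsubIcc : Set.Icc (min s t) (max s t) ⊆ Set.Icc a b :=
        Set.Icc_subset_Icc hs'.1 ht'.2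
      have hBarc : IsArcIn (δ (min s t)) (δ (max s t))
          (δ '' Set.Icc (min s t) (max s t)) :=
        ⟨min s t, max s t, hslt.le, δ, (geo_continuousOn hδ).mono hsubIcc,
          (geo_injOn hδ).mono hsubIcc, rfl, rfl, rfl⟩
      have hBsub : δ '' Set.Icc (min s t) (max s t) ⊆ A := by
        rw [← himg]; exact Set.image_mono hsubIcc
      have hne : δ (min s t) ≠ δ (max s t) :=
        fun e => absurd (geo_injOn hδ hs' ht' e) (ne_of_lt hslt)
      have hfixB : fixOf ρ (δ '' Set.Icc (min s t) (max s t)) = fixOf ρ A :=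
        hmax _ ⟨δ (min s t), δ (max s t), hne, hBarc⟩ hBsub
      apply Set.Subset.antisymm
      · intro g hg
        rw [← hfixB]
        intro w hw
        have hgu : ρ g u = u := hg u huS
        have hgv : ρ g v = v := hg v hvS
        have h1 : ρ g (δ (min s t)) = δ (min s t) := by
          rcases min_choice s t with hc | hc <;> rw [hc]
          · rw [hsu]; exact hgu
          · rw [htv]; exact hgv
        have h2 : ρ g (δ (max s t)) = δ (max s t) := by
          rcases max_choice s t with hc | hc <;> rw [hc]
          · rw [hsu]; exact hgu
          · rw [htv]; exact hgv
        exact fix_arc ρ h h1 h2 hBarc w hw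
      · intro g hg w hw
        exact hg w (hsub hw)
  · -- otherwise build an infinite ascending chain, contradicting `hacc`
    exfalso
    push_neg at hex
    have hstep : ∀ A : Set T, ((∃ u v : T, u ≠ v ∧ IsArcIn u v A) ∧ A ⊆ S) →
        ∃ B : Set T, ((∃ u v : T, u ≠ v ∧ IsArcIn u v B) ∧ B ⊆ S) ∧
          fixOf ρ A ⊂ fixOf ρ B := by
      intro A hA
      obtain ⟨B, hBarc, hBsub, hBne⟩ := hex A hA
      refine ⟨B, ⟨hBarc, hBsub.trans hA.2⟩, ?_⟩
      refine HasSubset.Subset.ssubset_of_ne ?_ (Ne.symm hBne)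
      intro g hg w hw
      exact hg w (hBsub hw)
    choose f hf using hstep
    let seq : ℕ → {A : Set T // (∃ u v : T, u ≠ v ∧ IsArcIn u v A) ∧ A ⊆ S} :=
      fun n => Nat.rec ⟨A₀, hPA₀⟩ (fun _ p => ⟨f p.1 p.2, (hf p.1 p.2).1⟩) n
    refine hacc ⟨fun n => (seq n).1, fun n => ?_, fun n => ?_⟩
    · obtain ⟨u, v, huv, harc⟩ := (seq n).2.1
      exact ⟨u, v, huv, (h u v).2 _ harc⟩
    · exact (hf (seq n).1 (seq n).2).2
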